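/- For distinct integers n, m ≥ 3, the simultaneous solutions (c,λ) ∈ ℂ² of λ(n-2)(3n²-n-2+c(n+2)) = (n-1)(n+1) and λ(m-2)(3m²-m-2+c(m+2)) = (m-1)(m+1) consist of exactly one point, namely c = -(m-1)(n-1)(m+n+mn)/(m+n) and λ = -(m+n)/((m-2)(n-2)(2m+2n+mn)). -/

import Mathlib

/-- For distinct integers `n, m ≥ 3`, the truncation curves of `W^k(sl_n, f_prin)` and
`W^{k'}(sl_m, f_prin)` intersect in exactly one point. -/
theorem stmt5 (n m : ℕ) (hn : 3 ≤ n) (hm : 3 ≤ m) (hnm : n ≠ m) (c l : ℂ) :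
    (l*((n:ℂ)-2)*(3*(n:ℂ)^2-n-2+c*((n:ℂ)+2)) = ((n:ℂ)-1)*((n:ℂ)+1) ∧
     l*((m:ℂ)-2)*(3*(m:ℂ)^2-m-2+c*((m:ℂ)+2)) = ((m:ℂ)-1)*((m:ℂ)+1)) ↔
    (c = -(((m:ℂ)-1)*((n:ℂ)-1)*((m:ℂ)+n+m*n))/((m:ℂ)+n) ∧
     l = -((m:ℂ)+n)/(((m:ℂ)-2)*((n:ℂ)-2)*(2*(m:ℂ)+2*n+m*n))) := by
  have cast_ne : ∀ k : ℕ, 0 < k → ((k : ℂ) ≠ 0) := fun k hk => Nat.cast_ne_zero.mpr hk.ne'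
  have h2n : (n:ℂ) - 2 ≠ 0 := by
    have := cast_ne (n-2) (by omega)
    rwa [Nat.cast_sub (by omega), Nat.cast_ofNat] at this
  have h2m : (m:ℂ) - 2 ≠ 0 := by
    have := cast_ne (m-2) (by omega)
    rwa [Nat.cast_sub (by omega), Nat.cast_ofNat] at this
  have h1n : (n:ℂ) - 1 ≠ 0 := by
    have := cast_ne (n-1) (by omega)
    rwa [Nat.cast_sub (by omega), Nat.cast_one] at this
  have h1n' : (n:ℂ) + 1 ≠ 0 := by
    have := cast_ne (n+1) (by omega)
    rwa [Nat.cast_add, Nat.cast_one] at this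
  have hMN : (m:ℂ) + n ≠ 0 := by
    have := cast_ne (m+n) (by omega)
    rwa [Nat.cast_add] at this
  have hK : 2*(m:ℂ) + 2*n + m*n ≠ 0 := by
    have := cast_ne (2*m+2*n+m*n) (by positivity)
    push_cast at this
    convert this using 2
  have hNM : (n:ℂ) - m ≠ 0 := by
    intro h
    exact hnm (Nat.cast_injective (by linear_combination h : (n:ℂ) = m))
  constructor
  · rintro ⟨h1, h2⟩
    have hl : l ≠ 0 := by
      intro h
      rw [h] at h1
      simp at h1
      rcases h1 with h | h
      · exact h1n h
      · exact h1n' h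
    have key : l * (3 * ((n:ℂ) - m)) *
        (c * ((m:ℂ)+n) + ((m:ℂ)-1)*((n:ℂ)-1)*((m:ℂ)+n+m*n)) = 0 := by
      linear_combination ((m:ℂ)^2 - 1) * h1 - ((n:ℂ)^2 - 1) * h2
    have hC : c * ((m:ℂ)+n) + ((m:ℂ)-1)*((n:ℂ)-1)*((m:ℂ)+n+m*n) = 0 := by
      rcases mul_eq_zero.mp key with h | h
      · rcases mul_eq_zero.mp h with h' | h'
        · exact absurd h' hl
        · exact absurd h' (by
            intro hh
            exact hNM (by
              have : (3:ℂ) ≠ 0 := by norm_num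
              rcases mul_eq_zero.mp hh with h3 | h3
              · exact absurd h3 this
              · exact h3))
      · exact h
    have hc : c = -(((m:ℂ)-1)*((n:ℂ)-1)*((m:ℂ)+n+m*n))/((m:ℂ)+n) := by
      rw [eq_div_iff hMN]
      linear_combination hC
    refine ⟨hc, ?_⟩
    have h12 : ((n:ℂ)-1)*((n:ℂ)+1) *
        (l * (((m:ℂ)-2)*((n:ℂ)-2)*(2*(m:ℂ)+2*n+m*n)) + ((m:ℂ)+n)) = 0 := by
      linear_combination -((m:ℂ)+n) * h1 + l * ((n:ℂ)-2) * ((n:ℂ)+2) * hC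
    have h12' : l * (((m:ℂ)-2)*((n:ℂ)-2)*(2*(m:ℂ)+2*n+m*n)) + ((m:ℂ)+n) = 0 := by
      rcases mul_eq_zero.mp h12 with h | h
      · exact absurd h (mul_ne_zero h1n h1n')
      · exact h
    rw [eq_div_iff (mul_ne_zero (mul_ne_zero h2m h2n) hK)]
    linear_combination h12'
  · rintro ⟨hc, hl⟩
    subst hc hl
    constructor
    · have hK' : ((m:ℂ)+n)*2 + m*n ≠ 0 := by
        intro h; exact hK (by linear_combination h)
      field_simp
      ring
    · have hK' : ((m:ℂ)+n)*2 + m*n ≠ 0 := by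
        intro h; exact hK (by linear_combination h)
      field_simp
      ring
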